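/- The function ρ ↦ E_x(ρ,Q) is nondecreasing on (0,∞), satisfies E_x(ρ,Q) ≤ −Σ_{x,x'} Q(x)Q(x') log Z(x,x') for every ρ > 0, and lim_{ρ→∞} E_x(ρ,Q) = −Σ_{x,x'} Q(x)Q(x') log Z(x,x') (the zero-rate expurgated exponent). -/

import Mathlib

open Real Filter

/-- `ρ ↦ E_x(ρ,Q)` is nondecreasing on `(0,∞)`, bounded above by the
zero-rate expurgated exponent `−∑_{x,x'} Q x Q x' log Z(x,x')`, and converges to it
as `ρ → ∞`. -/
theorem stmt_16 {X Y : Type*} [Fintype X] [Fintype Y] [Nonempty X] [Nonempty Y]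
    (W : X → Y → ℝ) (hWpos : ∀ x y, 0 < W x y) (hWsum : ∀ x, ∑ y, W x y = 1)
    (Q : X → ℝ) (hQpos : ∀ x, 0 < Q x) (hQsum : ∑ x, Q x = 1) :
    let Z : X → X → ℝ := fun x x' => ∑ y, Real.sqrt (W x y * W x' y)
    let Ex : ℝ → ℝ := fun ρ => -ρ * Real.log (∑ p : X × X, Q p.1 * Q p.2 * Z p.1 p.2 ^ (1 / ρ))
    let C : ℝ := -∑ p : X × X, Q p.1 * Q p.2 * Real.log (Z p.1 p.2)
    MonotoneOn Ex (Set.Ioi (0 : ℝ)) ∧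
    (∀ ρ : ℝ, 0 < ρ → Ex ρ ≤ C) ∧
    Filter.Tendsto Ex Filter.atTop (nhds C) := by
  intro Z Ex C
  have hZpos : ∀ x x', 0 < Z x x' := fun x x' =>
    Finset.sum_pos (fun y _ => Real.sqrt_pos.2 (mul_pos (hWpos x y) (hWpos x' y)))
      Finset.univ_nonempty
  set q : X × X → ℝ := fun p => Q p.1 * Q p.2 with hq
  have hqpos : ∀ p : X × X, 0 < q p := fun p => mul_pos (hQpos p.1) (hQpos p.2)
  have hqsum : ∑ p : X × X, q p = 1 := by
    rw [Fintype.sum_prod_type, ← Finset.sum_mul_sum, hQsum, mul_one]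
  set S : ℝ → ℝ := fun t => ∑ p : X × X, q p * Z p.1 p.2 ^ t with hS
  have hSpos : ∀ t, 0 < S t := fun t =>
    Finset.sum_pos (fun p _ => mul_pos (hqpos p) (Real.rpow_pos_of_pos (hZpos p.1 p.2) t))
      Finset.univ_nonempty
  have hExS : ∀ ρ : ℝ, Ex ρ = -(ρ * Real.log (S (1 / ρ))) := fun ρ => by
    simp only [Ex, S, hq, neg_mul]
  -- key slope inequality
  have key : ∀ t₁ t₂ : ℝ, 0 < t₂ → t₂ ≤ t₁ →
      (1 / t₂) * Real.log (S t₂) ≤ (1 / t₁) * Real.log (S t₁) := by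
    intro t₁ t₂ ht₂ hle
    have ht₁ : 0 < t₁ := lt_of_lt_of_le ht₂ hle
    have hr : 1 ≤ t₁ / t₂ := (one_le_div ht₂).2 hle
    have h := Real.arith_mean_le_rpow_mean Finset.univ q
      (fun p : X × X => Z p.1 p.2 ^ t₂) (fun p _ => (hqpos p).le) hqsum
      (fun p _ => (Real.rpow_pos_of_pos (hZpos p.1 p.2) t₂).le) hr
    have hzz : ∀ p : X × X, (Z p.1 p.2 ^ t₂) ^ (t₁ / t₂) = Z p.1 p.2 ^ t₁ := by
      intro p
      rw [← Real.rpow_mul (hZpos p.1 p.2).le, mul_div_cancel₀ _ ht₂.ne']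
    simp only [hzz] at h
    have h2 : S t₂ ≤ S t₁ ^ (1 / (t₁ / t₂)) := h
    have h3 : Real.log (S t₂) ≤ (1 / (t₁ / t₂)) * Real.log (S t₁) := by
      calc Real.log (S t₂) ≤ Real.log (S t₁ ^ (1 / (t₁ / t₂))) :=
            Real.log_le_log (hSpos t₂) h2
        _ = (1 / (t₁ / t₂)) * Real.log (S t₁) := Real.log_rpow (hSpos t₁) _
    have h4 := mul_le_mul_of_nonneg_left h3 (by positivity : (0:ℝ) ≤ 1 / t₂)
    calc (1 / t₂) * Real.log (S t₂) ≤ (1 / t₂) * ((1 / (t₁ / t₂)) * Real.log (S t₁)) := h4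
      _ = (1 / t₁) * Real.log (S t₁) := by
          field_simp
  have hmono : MonotoneOn Ex (Set.Ioi (0 : ℝ)) := by
    intro ρ₁ h₁ ρ₂ h₂ hle
    have h₁' : (0:ℝ) < ρ₁ := h₁
    have h₂' : (0:ℝ) < ρ₂ := h₂
    have ht : (0:ℝ) < 1 / ρ₂ := by positivity
    have hle' : 1 / ρ₂ ≤ 1 / ρ₁ := one_div_le_one_div_of_le h₁' hle
    have := key (1 / ρ₁) (1 / ρ₂) ht hle'
    rw [one_div_one_div, one_div_one_div] at this
    rw [hExS ρ₁, hExS ρ₂]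
    linarith
  -- derivative of log S at 0
  have hSderiv : HasDerivAt S (∑ p : X × X, q p * Real.log (Z p.1 p.2)) 0 := by
    have : HasDerivAt S (∑ p : X × X, q p * (Z p.1 p.2 ^ (0:ℝ) * Real.log (Z p.1 p.2))) 0 := by
      apply HasDerivAt.fun_sum
      intro p _
      exact ((Real.hasStrictDerivAt_const_rpow (hZpos p.1 p.2) 0).hasDerivAt).const_mul (q p)
    simpa using this
  have hS0 : S 0 = 1 := by
    simp only [hS, Real.rpow_zero, mul_one, hqsum]
  have hF : HasDerivAt (fun t => Real.log (S t))
      (∑ p : X × X, q p * Real.log (Z p.1 p.2)) 0 := by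
    have := hSderiv.log (by rw [hS0]; norm_num)
    simpa [hS0] using this
  set D : ℝ := ∑ p : X × X, q p * Real.log (Z p.1 p.2) with hD
  have hCD : C = -D := by
    simp only [C, hD, hq]
  have hslope : Tendsto (fun t => Real.log (S t) / t) (nhdsWithin 0 {(0:ℝ)}ᶜ) (nhds D) := by
    have := hasDerivAt_iff_tendsto_slope.1 hF
    have heq : (slope (fun t => Real.log (S t)) 0) = fun t => Real.log (S t) / t := by
      funext t
      simp [slope, hS0, div_eq_inv_mul]
    rwa [heq] at this
  have hinv : Tendsto (fun ρ : ℝ => 1 / ρ) atTop (nhdsWithin 0 {(0:ℝ)}ᶜ) := by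
    apply tendsto_nhdsWithin_of_tendsto_nhds_of_eventually_within
    · simpa using tendsto_inv_atTop_zero
    · filter_upwards [eventually_gt_atTop (0:ℝ)] with ρ hρ
      exact Set.mem_compl_singleton_iff.2 (one_div_ne_zero hρ.ne')
  have htendsto : Tendsto Ex atTop (nhds C) := by
    have h1 : Tendsto (fun ρ : ℝ => Real.log (S (1 / ρ)) / (1 / ρ)) atTop (nhds D) :=
      hslope.comp hinv
    have h2 : Tendsto (fun ρ : ℝ => -(Real.log (S (1 / ρ)) / (1 / ρ))) atTop (nhds (-D)) :=
      h1.neg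
    rw [hCD]
    apply h2.congr'
    filter_upwards [eventually_gt_atTop (0:ℝ)] with ρ hρ
    rw [hExS ρ]
    rw [div_div_eq_mul_div, div_one, mul_comm]
  refine ⟨hmono, ?_, htendsto⟩
  intro ρ hρ
  apply ge_of_tendsto htendsto
  filter_upwards [eventually_ge_atTop ρ] with ρ' hρ'
  exact hmono (Set.mem_Ioi.2 hρ) (Set.mem_Ioi.2 (lt_of_lt_of_le hρ hρ')) hρ'
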